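/- Assume in addition that F has non-empty subgradient at two measures ρ⁻ and ρ⁺ with ρ⁻(Ω) < 1 and ρ⁺(Ω) > 1, and that μ is supported on a compact set., the supremum in the dual formulation F_ε(μ) = sup { ∫ φ dμ − F*(−φ^c) : φ c-concave } is attained, i.e. there exists a c-concave maximizer φ. -/

import Mathlib

open MeasureTheory Filter Topology Set
open scoped ENNReal NNReal

noncomputable section

abbrev Euc (d : ℕ) : Type := EuclideanSpace ℝ (Fin d)

/-- the quadratic cost `c(x,y) = ‖x−y‖²/(2ε)` -/
def cost {d : ℕ} (ε : ℝ) (x y : Euc d) : ℝ := ‖x - y‖ ^ 2 / (2 * ε)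

/-- optimal transport cost from `ρ` to `μ` for the cost `c` -/
def Icost {d : ℕ} (c : Euc d → Euc d → ℝ) (ρ μ : Measure (Euc d)) : ℝ≥0∞ :=
  ⨅ (π : Measure (Euc d × Euc d)) (_ : π.map Prod.fst = ρ ∧ π.map Prod.snd = μ),
    ∫⁻ p, ENNReal.ofReal (c p.1 p.2) ∂π

/-- the Moreau envelope `F_ε(μ) = inf_{ρ ∈ P(Ω)} I_c(ρ,μ) + F(ρ)` -/
def moreauC {d : ℕ} (Ω : Set (Euc d)) (F : Measure (Euc d) → ℝ≥0∞)
    (c : Euc d → Euc d → ℝ) (μ : Measure (Euc d)) : ℝ≥0∞ :=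
  ⨅ (ρ : Measure (Euc d)) (_ : IsProbabilityMeasure ρ ∧ ρ Ωᶜ = 0), Icost c ρ μ + F ρ

/-- the `c`-transform `ψ^c = inf_x [c(x,·) − ψ(x)]` -/
def ctrans {d : ℕ} (c : Euc d → Euc d → ℝ) (ψ : Euc d → ℝ) (y : Euc d) : ℝ :=
  ⨅ x : Euc d, (c x y - ψ x)

/-- a function is `c`-concave when it is the `c`-transform of a (bounded continuous)
function -/
def CConcave {d : ℕ} (c : Euc d → Euc d → ℝ) (φ : Euc d → ℝ) : Prop :=
  ∃ ψ : Euc d → ℝ, Continuous ψ ∧ (∃ M : ℝ, ∀ x, |ψ x| ≤ M) ∧ φ = ctrans c ψ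

/-- Legendre transform of `F` in the duality between `M(Ω)` and `C⁰(Ω)`:
`F*(ψ) = sup_ρ [∫ ψ dρ − F(ρ)]`. -/
def legendre {d : ℕ} (Ω : Set (Euc d)) (F : Measure (Euc d) → ℝ≥0∞)
    (ψ : Euc d → ℝ) : EReal :=
  ⨆ (ρ : Measure (Euc d)) (_ : IsFiniteMeasure ρ ∧ ρ Ωᶜ = 0),
    (((∫ x, ψ x ∂ρ : ℝ) : EReal) - ((F ρ : ℝ≥0∞) : EReal))

/-- `φ ∈ ∂F(ρ)`, the subdifferential of `F` at `ρ` for this duality -/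
def InSubdiff {d : ℕ} (Ω : Set (Euc d)) (F : Measure (Euc d) → ℝ≥0∞)
    (ρ : Measure (Euc d)) (φ : Euc d → ℝ) : Prop :=
  ∀ σ : Measure (Euc d), IsFiniteMeasure σ → σ Ωᶜ = 0 →
    ((F ρ : ℝ≥0∞) : EReal) + ((∫ x, φ x ∂σ - ∫ x, φ x ∂ρ : ℝ) : EReal)
      ≤ ((F σ : ℝ≥0∞) : EReal)

/-- `(φ, ψ)` is a pair of Kantorovich potentials for the transport from `μ` to `ρ`
(for the cost `c`): admissible and attaining the optimal cost. -/
def IsKantorovichPair {d : ℕ} (c : Euc d → Euc d → ℝ) (μ ρ : Measure (Euc d))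
    (φ ψ : Euc d → ℝ) : Prop :=
  (∀ x y : Euc d, ψ x + φ y ≤ c x y) ∧
  (((∫ y, φ y ∂μ + ∫ x, ψ x ∂ρ : ℝ) : EReal) = ((Icost c ρ μ : ℝ≥0∞) : EReal))

/-- the value of the dual problem at `φ`: `∫ φ dμ − F*(−φ^c)` -/
def dualVal {d : ℕ} (Ω : Set (Euc d)) (F : Measure (Euc d) → ℝ≥0∞)
    (c : Euc d → Euc d → ℝ) (μ : Measure (Euc d)) (φ : Euc d → ℝ) : EReal :=
  ((∫ x, φ x ∂μ : ℝ) : EReal) - legendre Ω F (fun y => - ctrans c φ y)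

section AuxAll
variable {d : ℕ} {ε : ℝ}

lemma cost_nonneg (hε : 0 < ε) (x y : Euc d) : 0 ≤ cost ε x y := by
  unfold cost; positivity

lemma cost_self (x : Euc d) : cost ε x x = 0 := by simp [cost]

lemma cost_symm (x y : Euc d) : cost ε x y = cost ε y x := by
  simp [cost, norm_sub_rev]

lemma cost_le (hε : 0 < ε) {x y : Euc d} {a b : ℝ} (hx : ‖x‖ ≤ a) (hy : ‖y‖ ≤ b) :
    cost ε x y ≤ (a + b)^2 / (2*ε) := by
  unfold cost
  gcongr
  calc ‖x - y‖ ≤ ‖x‖ + ‖y‖ := norm_sub_le _ _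
    _ ≤ a + b := by linarith

lemma cost_diff_le (hε : 0 < ε) (x y y' : Euc d) :
    cost ε x y' - cost ε x y ≤ (‖y'‖ + ‖y‖ + 2*‖x‖) * ‖y' - y‖ / (2*ε) := by
  have h1 : ‖x - y'‖ ≤ ‖x‖ + ‖y'‖ := norm_sub_le _ _
  have h2 : ‖x - y‖ ≤ ‖x‖ + ‖y‖ := norm_sub_le _ _
  have h3 : ‖x - y'‖ - ‖x - y‖ ≤ ‖y' - y‖ := by
    have h := norm_sub_norm_le (x - y') (x - y)
    have : (x - y') - (x - y) = y - y' := by abel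
    rw [this] at h
    rw [norm_sub_rev y' y]
    exact h
  have h4 : (0:ℝ) ≤ ‖x - y‖ := norm_nonneg _
  have h5 : (0:ℝ) ≤ ‖x - y'‖ := norm_nonneg _
  have h6 : (0:ℝ) ≤ ‖y' - y‖ := norm_nonneg _
  unfold cost
  rw [div_sub_div_same]
  gcongr
  nlinarith [mul_le_mul_of_nonneg_left h3 (add_nonneg h5 h4),
    mul_le_mul_of_nonneg_right (add_le_add h1 h2) h6]

variable {d : ℕ} {ε : ℝ}

lemma ctrans_bddBelow (hε : 0 < ε) {ψ : Euc d → ℝ} {M : ℝ} (hM : ∀ x, ψ x ≤ M) (y : Euc d) :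
    BddBelow (range fun x => cost ε x y - ψ x) := by
  refine ⟨-M, ?_⟩
  rintro _ ⟨x, rfl⟩
  have := cost_nonneg hε x y
  have := hM x
  dsimp
  linarith

lemma ctrans_le (hε : 0 < ε) {ψ : Euc d → ℝ} {M : ℝ} (hM : ∀ x, ψ x ≤ M) (x y : Euc d) :
    ctrans (cost ε) ψ y ≤ cost ε x y - ψ x :=
  ciInf_le (ctrans_bddBelow hε hM y) x

lemma le_ctrans {c : Euc d → Euc d → ℝ} {ψ : Euc d → ℝ} {y : Euc d} {m : ℝ}
    (h : ∀ x, m ≤ c x y - ψ x) : m ≤ ctrans c ψ y := le_ciInf h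

/-- upper bound: `ψ^c(y) ≤ -ψ(y)` -/
lemma ctrans_le_neg (hε : 0 < ε) {ψ : Euc d → ℝ} {M : ℝ} (hM : ∀ x, ψ x ≤ M) (y : Euc d) :
    ctrans (cost ε) ψ y ≤ -ψ y := by
  have := ctrans_le hε hM y y
  rwa [cost_self, zero_sub] at this

lemma neg_le_ctrans (hε : 0 < ε) {ψ : Euc d → ℝ} {M : ℝ} (hM : ∀ x, ψ x ≤ M) (y : Euc d) :
    -M ≤ ctrans (cost ε) ψ y := by
  refine le_ctrans fun x => ?_
  have := cost_nonneg hε x y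
  have := hM x
  linarith

lemma ctrans_abs_le (hε : 0 < ε) {ψ : Euc d → ℝ} {M : ℝ} (hM : ∀ x, |ψ x| ≤ M) (y : Euc d) :
    |ctrans (cost ε) ψ y| ≤ M := by
  rw [abs_le]
  constructor
  · exact neg_le_ctrans hε (fun x => (abs_le.1 (hM x)).2) y
  · have h := ctrans_le_neg hε (fun x => (abs_le.1 (hM x)).2) y
    have := (abs_le.1 (hM y)).1
    linarith

lemma ctrans_nonexp (hε : 0 < ε) {φ1 φ2 : Euc d → ℝ} {M1 M2 δ : ℝ}
    (h1 : ∀ x, φ1 x ≤ M1) (h2 : ∀ x, φ2 x ≤ M2)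
    (h : ∀ x, |φ1 x - φ2 x| ≤ δ) (y : Euc d) :
    |ctrans (cost ε) φ1 y - ctrans (cost ε) φ2 y| ≤ δ := by
  have hA : ctrans (cost ε) φ1 y - δ ≤ ctrans (cost ε) φ2 y := by
    refine le_ctrans fun x => ?_
    have hx := ctrans_le hε h1 x y
    have := (abs_le.1 (h x)).1
    linarith
  have hB : ctrans (cost ε) φ2 y - δ ≤ ctrans (cost ε) φ1 y := by
    refine le_ctrans fun x => ?_
    have hx := ctrans_le hε h2 x y
    have := (abs_le.1 (h x)).2
    linarith
  rw [abs_le]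
  constructor <;> linarith

/-- one-sided Lipschitz bound for `c`-transforms of bounded functions, on balls -/
lemma ctrans_lip (hε : 0 < ε) {φ : Euc d → ℝ} {M : ℝ} (hM : ∀ x, |φ x| ≤ M) {r : ℝ}
    {y y' : Euc d} (hy : ‖y‖ ≤ r) (hy' : ‖y'‖ ≤ r) :
    ctrans (cost ε) φ y' - ctrans (cost ε) φ y
      ≤ ((4*r + 2*Real.sqrt (2*ε*(2*M+1))) / (2*ε)) * ‖y' - y‖ := by
  set S := Real.sqrt (2*ε*(2*M+1)) with hS
  have hM0 : 0 ≤ M := le_trans (abs_nonneg _) (hM y)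
  have hS0 : 0 ≤ S := Real.sqrt_nonneg _
  rw [sub_le_iff_le_add]
  refine le_of_forall_pos_le_add fun δ hδ => ?_
  set δ' := min δ 1 with hδ'
  have hδ'0 : 0 < δ' := lt_min hδ one_pos
  have hδ'1 : δ' ≤ 1 := min_le_right _ _
  have hδ'δ : δ' ≤ δ := min_le_left _ _
  obtain ⟨x, hx⟩ := exists_lt_of_ciInf_lt
    (show (⨅ x : Euc d, (cost ε x y - φ x)) < ctrans (cost ε) φ y + δ' by
      rw [ctrans]; linarith [lt_add_of_pos_right (⨅ x : Euc d, (cost ε x y - φ x)) hδ'0])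
  -- hx : cost ε x y - φ x < ctrans (cost ε) φ y + δ'
  have hub : ctrans (cost ε) φ y ≤ -φ y := ctrans_le_neg hε (fun x => (abs_le.1 (hM x)).2) y
  have hcb : cost ε x y ≤ 2*M + 1 := by
    have h1 := (abs_le.1 (hM x)).2
    have h2 := (abs_le.1 (hM y)).1
    linarith
  have hxy : ‖x - y‖ ≤ S := by
    have hsq : ‖x - y‖^2 ≤ 2*ε*(2*M+1) := by
      have : ‖x - y‖^2 / (2*ε) ≤ 2*M+1 := hcb
      rw [div_le_iff₀ (by linarith)] at this
      linarith
    calc ‖x - y‖ = Real.sqrt (‖x - y‖^2) := by rw [Real.sqrt_sq (norm_nonneg _)]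
      _ ≤ S := Real.sqrt_le_sqrt hsq
  have hxn : ‖x‖ ≤ r + S := by
    calc ‖x‖ = ‖y + (x - y)‖ := by congr 1; abel
      _ ≤ ‖y‖ + ‖x - y‖ := norm_add_le _ _
      _ ≤ r + S := by linarith
  have key : ctrans (cost ε) φ y' ≤ cost ε x y' - φ x :=
    ctrans_le hε (fun x => (abs_le.1 (hM x)).2) x y'
  have diff := cost_diff_le hε x y y'
  have hfac : (‖y'‖ + ‖y‖ + 2*‖x‖) * ‖y' - y‖ / (2*ε) ≤ (4*r + 2*S) / (2*ε) * ‖y' - y‖ := by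
    rw [div_mul_eq_mul_div]
    have hsum : ‖y'‖ + ‖y‖ + 2*‖x‖ ≤ 4*r + 2*S := by linarith
    have hmul : (‖y'‖ + ‖y‖ + 2*‖x‖) * ‖y' - y‖ ≤ (4*r + 2*S) * ‖y' - y‖ :=
      mul_le_mul_of_nonneg_right hsum (norm_nonneg _)
    have h2ε : (0:ℝ) < 2*ε := by linarith
    exact (div_le_div_iff_of_pos_right h2ε).2 hmul
  linarith

lemma ctrans_cont (hε : 0 < ε) {φ : Euc d → ℝ} {M : ℝ} (hM : ∀ x, |φ x| ≤ M) :
    Continuous (ctrans (cost ε) φ) := by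
  rw [continuous_iff_continuousAt]
  intro y0
  set r := ‖y0‖ + 1 with hr
  set Λ := (4*r + 2*Real.sqrt (2*ε*(2*M+1))) / (2*ε) with hΛ
  have hlip : LipschitzOnWith (Real.toNNReal Λ) (ctrans (cost ε) φ)
      (Metric.closedBall (0 : Euc d) r) := by
    rw [lipschitzOnWith_iff_dist_le_mul]
    intro y hy y' hy'
    rw [Metric.mem_closedBall, dist_zero_right] at hy hy'
    rw [Real.dist_eq, dist_eq_norm]
    rw [abs_le]
    have h1 := ctrans_lip hε hM hy' hy
    have h2 := ctrans_lip hε hM hy hy'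
    have hnorm : ‖y' - y‖ = ‖y - y'‖ := norm_sub_rev _ _
    rw [hnorm] at h2
    have hΛle : Λ ≤ (Real.toNNReal Λ : ℝ) := Real.le_coe_toNNReal Λ
    have hn : (0:ℝ) ≤ ‖y - y'‖ := norm_nonneg _
    have hprod : Λ * ‖y - y'‖ ≤ (Real.toNNReal Λ : ℝ) * ‖y - y'‖ :=
      mul_le_mul_of_nonneg_right hΛle hn
    constructor
    · linarith
    · linarith
  have : Metric.closedBall (0 : Euc d) r ∈ 𝓝 y0 := by
    refine Filter.mem_of_superset (Metric.isOpen_ball.mem_nhds ?_) Metric.ball_subset_closedBall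
    rw [Metric.mem_ball, dist_zero_right]
    linarith
  exact (hlip.continuousOn.continuousAt this)


end AuxAll

/-- truncated restricted transform -/
def PW {d : ℕ} (ε R' : ℝ) (Ω : Set (Euc d)) (v : Euc d → ℝ) : Euc d → ℝ :=
  fun y => min (⨅ z : Ω, (cost ε z y - v z)) R'

section AuxAll2
variable {d : ℕ} {ε : ℝ} {Ω : Set (Euc d)} {v : Euc d → ℝ} {B R' : ℝ}

lemma PW_bddBelow (hε : 0 < ε) (hΩne : Ω.Nonempty) (hB : ∀ z ∈ Ω, v z ≤ B) (y : Euc d) :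
    BddBelow (range fun z : Ω => cost ε z y - v z) := by
  refine ⟨-B, ?_⟩
  rintro _ ⟨z, rfl⟩
  have := cost_nonneg hε (z : Euc d) y
  have := hB z z.2
  dsimp
  linarith

lemma PW_le (hε : 0 < ε) (hΩne : Ω.Nonempty) (hB : ∀ z ∈ Ω, v z ≤ B) {z : Euc d}
    (hz : z ∈ Ω) (y : Euc d) : PW ε R' Ω v y ≤ cost ε z y - v z :=
  le_trans (min_le_left _ _) (ciInf_le (PW_bddBelow hε hΩne hB y) ⟨z, hz⟩)

lemma PW_le' (y : Euc d) : PW ε R' Ω v y ≤ R' := min_le_right _ _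

lemma PW_ge (hε : 0 < ε) (hΩne : Ω.Nonempty) (hB : ∀ z ∈ Ω, v z ≤ B) (y : Euc d) :
    min (-B) R' ≤ PW ε R' Ω v y := by
  haveI : Nonempty Ω := hΩne.to_subtype
  refine min_le_min ?_ le_rfl
  refine le_ciInf fun z => ?_
  have := cost_nonneg hε (z : Euc d) y
  have := hB z z.2
  linarith

lemma PW_abs_le (hε : 0 < ε) (hΩne : Ω.Nonempty) (hB : ∀ z ∈ Ω, |v z| ≤ B) (y : Euc d) :
    |PW ε R' Ω v y| ≤ max B |R'| := by
  rw [abs_le]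
  constructor
  · have h := PW_ge (R' := R') hε hΩne (fun z hz => (abs_le.1 (hB z hz)).2) y
    have h1 : -max B |R'| ≤ -B := by
      simp only [neg_le_neg_iff]
      exact le_max_left _ _
    have h2 : -max B |R'| ≤ R' := by
      have := neg_abs_le R'
      have := le_max_right B |R'|
      linarith
    calc -max B |R'| ≤ min (-B) R' := le_min h1 h2
      _ ≤ _ := h
  · have := PW_le' (v := v) (Ω := Ω) (ε := ε) (R' := R') y
    have := le_abs_self R'
    have := le_max_right B |R'|
    linarith

/-- Lipschitz property of PW on balls -/
lemma PW_lip (hε : 0 < ε) (hΩne : Ω.Nonempty) {RΩ : ℝ} (hΩR : ∀ z ∈ Ω, ‖z‖ ≤ RΩ)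
    (hB : ∀ z ∈ Ω, v z ≤ B) {r : ℝ} {y y' : Euc d} (hy : ‖y‖ ≤ r) (hy' : ‖y'‖ ≤ r) :
    PW ε R' Ω v y' - PW ε R' Ω v y ≤ ((2*r + 2*RΩ) / (2*ε)) * ‖y' - y‖ := by
  haveI : Nonempty Ω := hΩne.to_subtype
  set Λ := ((2*r + 2*RΩ) / (2*ε)) with hΛ
  have hΛn : 0 ≤ Λ * ‖y' - y‖ := by
    have h0 : (0:ℝ) ≤ RΩ := le_trans (norm_nonneg _) (hΩR _ hΩne.choose_spec)
    have hr0 : (0:ℝ) ≤ r := le_trans (norm_nonneg _) hy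
    have : 0 ≤ Λ := by positivity
    exact mul_nonneg this (norm_nonneg _)
  have key : ∀ z : Ω, PW ε R' Ω v y' - Λ * ‖y' - y‖ ≤ cost ε z y - v z := by
    intro z
    have h1 : PW ε R' Ω v y' ≤ cost ε z y' - v z := PW_le hε hΩne hB z.2 y'
    have h2 : cost ε z y' - cost ε z y ≤ Λ * ‖y' - y‖ := by
      have := cost_diff_le hε (z : Euc d) y y'
      have hz := hΩR z z.2
      have hsum : ‖y'‖ + ‖y‖ + 2*‖(z : Euc d)‖ ≤ 2*r + 2*RΩ := by linarith
      have h2ε : (0:ℝ) < 2*ε := by linarith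
      calc cost ε z y' - cost ε z y ≤ (‖y'‖ + ‖y‖ + 2*‖(z:Euc d)‖) * ‖y' - y‖ / (2*ε) := this
        _ ≤ (2*r + 2*RΩ) * ‖y' - y‖ / (2*ε) := by
            exact (div_le_div_iff_of_pos_right h2ε).2
              (mul_le_mul_of_nonneg_right hsum (norm_nonneg _))
        _ = Λ * ‖y' - y‖ := by rw [hΛ, div_mul_eq_mul_div]
    linarith
  have hinf : PW ε R' Ω v y' - Λ * ‖y' - y‖ ≤ ⨅ z : Ω, (cost ε z y - v z) := le_ciInf key
  have hR : PW ε R' Ω v y' - Λ * ‖y' - y‖ ≤ R' := by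
    have := PW_le' (v := v) (Ω := Ω) (ε := ε) (R' := R') y'
    linarith
  have : PW ε R' Ω v y' - Λ * ‖y' - y‖ ≤ PW ε R' Ω v y := le_min hinf hR
  linarith

lemma PW_cont (hε : 0 < ε) (hΩne : Ω.Nonempty) {RΩ : ℝ} (hΩR : ∀ z ∈ Ω, ‖z‖ ≤ RΩ)
    (hB : ∀ z ∈ Ω, v z ≤ B) : Continuous (PW ε R' Ω v) := by
  rw [continuous_iff_continuousAt]
  intro y0
  set r := ‖y0‖ + 1 with hr
  set Λ := ((2*r + 2*RΩ) / (2*ε)) with hΛ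
  have hlip : LipschitzOnWith (Real.toNNReal Λ) (PW ε R' Ω v)
      (Metric.closedBall (0 : Euc d) r) := by
    rw [lipschitzOnWith_iff_dist_le_mul]
    intro y hy y' hy'
    rw [Metric.mem_closedBall, dist_zero_right] at hy hy'
    rw [Real.dist_eq, dist_eq_norm]
    have h1 := PW_lip (R' := R') hε hΩne hΩR hB hy' hy
    have h2 := PW_lip (R' := R') hε hΩne hΩR hB hy hy'
    have hnorm : ‖y' - y‖ = ‖y - y'‖ := norm_sub_rev _ _
    rw [hnorm] at h2
    have hΛle : Λ ≤ (Real.toNNReal Λ : ℝ) := Real.le_coe_toNNReal Λ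
    have hprod : Λ * ‖y - y'‖ ≤ (Real.toNNReal Λ : ℝ) * ‖y - y'‖ :=
      mul_le_mul_of_nonneg_right hΛle (norm_nonneg _)
    rw [abs_le]
    constructor <;> linarith
  have : Metric.closedBall (0 : Euc d) r ∈ 𝓝 y0 := by
    refine Filter.mem_of_superset (Metric.isOpen_ball.mem_nhds ?_) Metric.ball_subset_closedBall
    rw [Metric.mem_ball, dist_zero_right]
    linarith
  exact hlip.continuousOn.continuousAt this

/-- nonexpansiveness of PW in sup norm over Ω -/
lemma PW_nonexp (hε : 0 < ε) (hΩne : Ω.Nonempty) {v1 v2 : Euc d → ℝ} {B1 B2 δ : ℝ}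
    (h1 : ∀ z ∈ Ω, v1 z ≤ B1) (h2 : ∀ z ∈ Ω, v2 z ≤ B2)
    (h : ∀ z ∈ Ω, |v1 z - v2 z| ≤ δ) (y : Euc d) :
    |PW ε R' Ω v1 y - PW ε R' Ω v2 y| ≤ δ := by
  haveI : Nonempty Ω := hΩne.to_subtype
  have hdel0 : 0 ≤ δ := le_trans (abs_nonneg _) (h _ hΩne.choose_spec)
  have hA : PW ε R' Ω v1 y - δ ≤ PW ε R' Ω v2 y := by
    have hinf : PW ε R' Ω v1 y - δ ≤ ⨅ z : Ω, (cost ε z y - v2 z) := by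
      refine le_ciInf fun z => ?_
      have := PW_le (R' := R') hε hΩne h1 z.2 y
      have := (abs_le.1 (h z z.2)).1
      linarith
    have hR : PW ε R' Ω v1 y - δ ≤ R' := by
      have := PW_le' (v := v1) (Ω := Ω) (ε := ε) (R' := R') y
      linarith
    exact le_min hinf hR
  have hB : PW ε R' Ω v2 y - δ ≤ PW ε R' Ω v1 y := by
    have hinf : PW ε R' Ω v2 y - δ ≤ ⨅ z : Ω, (cost ε z y - v1 z) := by
      refine le_ciInf fun z => ?_
      have := PW_le (R' := R') hε hΩne h2 z.2 y
      have := (abs_le.1 (h z z.2)).2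
      linarith
    have hR : PW ε R' Ω v2 y - δ ≤ R' := by
      have := PW_le' (v := v2) (Ω := Ω) (ε := ε) (R' := R') y
      linarith
    exact le_min hinf hR
  rw [abs_le]
  constructor <;> linarith

/-- the transform of `PW` dominates `v` on `Ω` -/
lemma PW_ctrans_ge (hε : 0 < ε) (hΩne : Ω.Nonempty) (hB : ∀ z ∈ Ω, v z ≤ B)
    {z : Euc d} (hz : z ∈ Ω) : v z ≤ ctrans (cost ε) (PW ε R' Ω v) z := by
  refine le_ctrans fun x => ?_
  have h := PW_le (R' := R') hε hΩne hB hz x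
  have hsymm : cost ε z x = cost ε x z := cost_symm _ _
  linarith

lemma PW_ctrans_ge' (hε : 0 < ε) (z : Euc d) :
    -R' ≤ ctrans (cost ε) (PW ε R' Ω v) z := by
  refine le_ctrans fun x => ?_
  have := cost_nonneg hε x z
  have := PW_le' (v := v) (Ω := Ω) (ε := ε) (R' := R') x
  linarith

lemma PW_ctrans_ub (hε : 0 < ε) (hΩne : Ω.Nonempty) (hB : ∀ z ∈ Ω, |v z| ≤ B) (x : Euc d) :
    ctrans (cost ε) (PW ε R' Ω v) x ≤ max B (-R') := by
  have h1 := ctrans_le hε (ψ := PW ε R' Ω v) (M := R')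
    (fun u => PW_le' (v := v) (Ω := Ω) (ε := ε) u) x x
  rw [cost_self] at h1
  have h2 := PW_ge (R' := R') hε hΩne (fun z hz => (abs_le.1 (hB z hz)).2) x
  rcases le_total (-B) R' with h | h
  · rw [min_eq_left h] at h2
    have := le_max_left B (-R')
    linarith
  · rw [min_eq_right h] at h2
    have := le_max_right B (-R')
    linarith

/-- `PW v` is `c`-concave: it equals the transform of its own transform -/
lemma PW_ctrans_ctrans (hε : 0 < ε) (hΩne : Ω.Nonempty) (hB : ∀ z ∈ Ω, |v z| ≤ B) :
    ctrans (cost ε) (ctrans (cost ε) (PW ε R' Ω v)) = PW ε R' Ω v := by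
  haveI : Nonempty Ω := hΩne.to_subtype
  funext y
  set w := ctrans (cost ε) (PW ε R' Ω v) with hw
  have hwub : ∀ x, w x ≤ max B (-R') := fun x => PW_ctrans_ub hε hΩne hB x
  apply le_antisymm
  · refine le_min ?_ ?_
    · refine le_ciInf fun z => ?_
      have hwz : ctrans (cost ε) w y ≤ cost ε (z : Euc d) y - w z :=
        ctrans_le hε (M := max B (-R')) hwub z y
      have h2 : v z ≤ w z := PW_ctrans_ge (R' := R') hε hΩne
        (fun u hu => (abs_le.1 (hB u hu)).2) z.2
      linarith
    · have hwy : ctrans (cost ε) w y ≤ cost ε y y - w y :=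
        ctrans_le hε (M := max B (-R')) hwub y y
      rw [cost_self] at hwy
      have := PW_ctrans_ge' (v := v) (Ω := Ω) (R' := R') hε y
      linarith
  · refine le_ctrans fun x => ?_
    have h : w x ≤ cost ε y x - PW ε R' Ω v y :=
      ctrans_le hε (ψ := PW ε R' Ω v) (M := R')
        (fun u => PW_le' (v := v) (Ω := Ω) (ε := ε) u) y x
    have hsymm : cost ε y x = cost ε x y := cost_symm _ _
    linarith

variable {d : ℕ} {Ω : Set (Euc d)} {F : Measure (Euc d) → ℝ≥0∞}

lemma ennreal_coe_ereal_eq {a : ℝ≥0∞} (h : a ≠ ⊤) :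
    ((a : EReal)) = ((a.toReal : ℝ) : EReal) := by
  have hne : (a : EReal) ≠ ⊤ := by
    simp only [ne_eq, EReal.coe_ennreal_eq_top_iff]
    exact h
  have hnb : (a : EReal) ≠ ⊥ := by
    intro hc
    have := EReal.coe_ennreal_nonneg a
    rw [hc] at this
    exact absurd this (by simp)
  have := EReal.coe_toReal hne hnb
  rw [EReal.toReal_coe_ennreal] at this
  exact this.symm

lemma integrable_of_bound (σ : Measure (Euc d)) [IsFiniteMeasure σ] (f : Euc d → ℝ)
    (hf : Continuous f) (M : ℝ) (h : ∀ x, |f x| ≤ M) : Integrable f σ :=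
  Integrable.mono' (integrable_const M) hf.aestronglyMeasurable
    (Filter.Eventually.of_forall fun x => by simpa using h x)

lemma ae_mem_of_null_compl (σ : Measure (Euc d)) (h : σ Ωᶜ = 0) : ∀ᵐ x ∂σ, x ∈ Ω := by
  rw [ae_iff]
  exact h

lemma integral_mono_on_supp (σ : Measure (Euc d)) (hσ : σ Ωᶜ = 0) {f g : Euc d → ℝ}
    (hf : Integrable f σ) (hg : Integrable g σ) (h : ∀ x ∈ Ω, f x ≤ g x) :
    ∫ x, f x ∂σ ≤ ∫ x, g x ∂σ :=
  integral_mono_ae hf hg (((ae_mem_of_null_compl σ hσ)).mono fun x hx => h x hx)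

lemma legendre_ge (σ : Measure (Euc d)) (hσ1 : IsFiniteMeasure σ) (hσ2 : σ Ωᶜ = 0)
    (ψ : Euc d → ℝ) :
    ((∫ x, ψ x ∂σ : ℝ) : EReal) - ((F σ : ℝ≥0∞) : EReal) ≤ legendre Ω F ψ :=
  le_iSup₂ (f := fun ρ (_ : IsFiniteMeasure ρ ∧ ρ Ωᶜ = 0) =>
    (((∫ x, ψ x ∂ρ : ℝ) : EReal) - ((F ρ : ℝ≥0∞) : EReal))) σ ⟨hσ1, hσ2⟩

lemma legendre_le {ψ : Euc d → ℝ} {a : EReal}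
    (h : ∀ σ : Measure (Euc d), IsFiniteMeasure σ → σ Ωᶜ = 0 →
      ((∫ x, ψ x ∂σ : ℝ) : EReal) - ((F σ : ℝ≥0∞) : EReal) ≤ a) :
    legendre Ω F ψ ≤ a :=
  iSup₂_le fun σ hσ => h σ hσ.1 hσ.2

lemma legendre_mono {ψ1 ψ2 : Euc d → ℝ} (hc1 : Continuous ψ1) (hc2 : Continuous ψ2)
    {M1 M2 : ℝ} (hM1 : ∀ x, |ψ1 x| ≤ M1) (hM2 : ∀ x, |ψ2 x| ≤ M2)
    (h : ∀ x ∈ Ω, ψ1 x ≤ ψ2 x) : legendre Ω F ψ1 ≤ legendre Ω F ψ2 := by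
  refine legendre_le fun σ hσ1 hσ2 => ?_
  haveI := hσ1
  refine le_trans ?_ (legendre_ge σ hσ1 hσ2 ψ2)
  refine EReal.sub_le_sub ?_ le_rfl
  rw [EReal.coe_le_coe_iff]
  exact integral_mono_on_supp σ hσ2 (integrable_of_bound σ ψ1 hc1 M1 hM1)
    (integrable_of_bound σ ψ2 hc2 M2 hM2) h


lemma PW_anti {d : ℕ} {ε : ℝ} {Ω : Set (Euc d)} {v1 v2 : Euc d → ℝ} {B R' : ℝ}
    (hε : 0 < ε) (hΩne : Ω.Nonempty) (hB2 : ∀ z ∈ Ω, v2 z ≤ B)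
    (h : ∀ z ∈ Ω, v1 z ≤ v2 z) (y : Euc d) : PW ε R' Ω v2 y ≤ PW ε R' Ω v1 y := by
  haveI : Nonempty Ω := hΩne.to_subtype
  refine min_le_min ?_ le_rfl
  refine le_ciInf fun z => ?_
  refine le_trans (ciInf_le (PW_bddBelow hε hΩne hB2 y) z) ?_
  have := h z z.2
  linarith


end AuxAll2

set_option maxHeartbeats 2000000 in
/-- **existence of a dual maximizer.** If, in addition, `F` has non-empty
subgradient at two measures `ρ⁻` and `ρ⁺` with `ρ⁻(Ω) < 1 < ρ⁺(Ω)`, and `μ` is supported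
on a compact set, then the supremum in the dual formulation
`F_ε(μ) = sup {∫ φ dμ − F*(−φ^c) : φ c-concave}` is attained. -/
theorem moreau_dual_attained
    (d : ℕ) (ε : ℝ) (hε : 0 < ε)
    (Ω : Set (Euc d)) (hΩc : IsCompact Ω) (hΩmeas : MeasurableSet Ω) (hΩne : Ω.Nonempty)
    (F : Measure (Euc d) → ℝ≥0∞)
    (hFconv : ∀ ρ σ : Measure (Euc d), ∀ a b : ℝ≥0∞, a + b = 1 →
      F (a • ρ + b • σ) ≤ a * F ρ + b * F σ)
    (hFlsc : ∀ (ρ : ℕ → Measure (Euc d)) (σ : Measure (Euc d)),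
      (∀ n, IsFiniteMeasure (ρ n)) → IsFiniteMeasure σ →
      (∀ f : BoundedContinuousFunction (Euc d) ℝ,
        Tendsto (fun n => ∫ x, f x ∂(ρ n)) atTop (𝓝 (∫ x, f x ∂σ))) →
      F σ ≤ liminf (fun n => F (ρ n)) atTop)
    (hFsupp : ∀ ρ : Measure (Euc d), F ρ ≠ ⊤ → ρ Ωᶜ = 0)
    -- `F` has non-empty subgradient at `ρ⁻` and `ρ⁺`, with `ρ⁻(Ω) < 1 < ρ⁺(Ω)`
    (ρminus ρplus : Measure (Euc d))
    (hminus : IsFiniteMeasure ρminus ∧ ρminus Ωᶜ = 0 ∧ ρminus Set.univ < 1 ∧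
      ∃ φm : Euc d → ℝ, Continuous φm ∧ InSubdiff Ω F ρminus φm)
    (hplus : IsFiniteMeasure ρplus ∧ ρplus Ωᶜ = 0 ∧ 1 < ρplus Set.univ ∧
      ∃ φp : Euc d → ℝ, Continuous φp ∧ InSubdiff Ω F ρplus φp)
    -- `μ` is supported on a compact set
    (μ : Measure (Euc d)) (hμ : IsProbabilityMeasure μ)
    (hμcpt : ∃ K : Set (Euc d), IsCompact K ∧ μ Kᶜ = 0) :
    ∃ φ : Euc d → ℝ, CConcave (cost ε) φ ∧
      dualVal Ω F (cost ε) μ φ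
        = ⨆ (ψ : Euc d → ℝ) (_ : CConcave (cost ε) ψ), dualVal Ω F (cost ε) μ ψ := by
  classical
  -- the zero function is c-concave
  have hzero : ctrans (cost ε) (fun _ : Euc d => (0:ℝ)) = fun _ => (0:ℝ) := by
    funext y
    apply le_antisymm
    · have h := ctrans_le hε (ψ := fun _ : Euc d => (0:ℝ)) (M := 0) (fun _ => le_rfl) y y
      rw [cost_self, sub_zero] at h
      exact h
    · exact le_ctrans fun x => by simpa using cost_nonneg hε x y
  have hCC0 : CConcave (cost ε) (fun _ : Euc d => (0:ℝ)) :=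
    ⟨fun _ => 0, continuous_const, ⟨0, fun x => by simp⟩, hzero.symm⟩
  by_cases heasy : ∀ σ : Measure (Euc d), IsFiniteMeasure σ → σ Ωᶜ = 0 → F σ = ⊤
  · -- degenerate case : `legendre` is constantly `⊥`, `dualVal` constantly `⊤`
    have hleg : ∀ ψ : Euc d → ℝ, legendre Ω F ψ = ⊥ := by
      intro ψ
      refine le_bot_iff.1 (legendre_le fun σ h1 h2 => ?_)
      rw [heasy σ h1 h2, EReal.coe_ennreal_top, EReal.sub_top]
    have hdv : dualVal Ω F (cost ε) μ (fun _ => (0:ℝ)) = ⊤ := by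
      rw [dualVal, hleg]
      exact EReal.coe_sub_bot _
    refine ⟨fun _ => 0, hCC0, le_antisymm ?_ ?_⟩
    · exact le_iSup₂_of_le (fun _ => (0:ℝ)) hCC0 le_rfl
    · rw [hdv]; exact le_top
  · push_neg at heasy
    obtain ⟨hmfin, hmsupp, hmlt, φm, hφmc, hφmsub⟩ := hminus
    obtain ⟨hpfin, hpsupp, hplt, φp, hφpc, hφpsub⟩ := hplus
    haveI := hmfin; haveI := hpfin
    have hsub_top : ∀ (ρ0 : Measure (Euc d)) (φ0 : Euc d → ℝ),
        InSubdiff Ω F ρ0 φ0 → F ρ0 = ⊤ → False := by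
      intro ρ0 φ0 hsub htop
      obtain ⟨σ, h1, h2, h3⟩ := heasy
      have h := hsub σ h1 h2
      rw [htop, EReal.coe_ennreal_top, EReal.top_add_coe] at h
      have h4 : ((F σ : ℝ≥0∞) : EReal) = ⊤ := top_le_iff.1 h
      rw [EReal.coe_ennreal_eq_top_iff] at h4
      exact h3 h4
    have hFm : F ρminus ≠ ⊤ := fun h => hsub_top _ _ hφmsub h
    have hFp : F ρplus ≠ ⊤ := fun h => hsub_top _ _ hφpsub h
    obtain ⟨K, hKc, hμK⟩ := hμcpt
    obtain ⟨RΩ0, hRΩ0⟩ := hΩc.isBounded.subset_closedBall 0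
    obtain ⟨RK0, hRK0⟩ := hKc.isBounded.subset_closedBall 0
    set RΩ := max RΩ0 0 with hRΩdef
    set RK := max RK0 0 with hRKdef
    have hRΩ : ∀ z ∈ Ω, ‖z‖ ≤ RΩ := by
      intro z hz
      have h := hRΩ0 hz
      rw [Metric.mem_closedBall, dist_zero_right] at h
      exact le_trans h (le_max_left _ _)
    have hRK : ∀ y ∈ K, ‖y‖ ≤ RK := by
      intro y hy
      have h := hRK0 hy
      rw [Metric.mem_closedBall, dist_zero_right] at h
      exact le_trans h (le_max_left _ _)
    have hRΩnn : (0:ℝ) ≤ RΩ := le_max_right _ _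
    have hRKnn : (0:ℝ) ≤ RK := le_max_right _ _
    set C0 := (RΩ + RK)^2/(2*ε) with hC0def
    have hC0 : ∀ z ∈ Ω, ∀ y ∈ K, cost ε z y ≤ C0 :=
      fun z hz y hy => cost_le hε (hRΩ z hz) (hRK y hy)
    have hC0nn : 0 ≤ C0 := by positivity
    set mm := (ρminus univ).toReal with hmmdef
    set mp := (ρplus univ).toReal with hmpdef
    have hmm1 : mm < 1 := by
      have := (ENNReal.toReal_lt_toReal (measure_ne_top ρminus univ) ENNReal.one_ne_top).2 hmlt
      simpa using this
    have hmp1 : 1 < mp := by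
      have := (ENNReal.toReal_lt_toReal ENNReal.one_ne_top (measure_ne_top ρplus univ)).2 hplt
      simpa using this
    have hmm0 : 0 ≤ mm := ENNReal.toReal_nonneg
    -- the probability measure ρstar interpolating ρminus and ρplus
    set t := (mp - 1)/(mp - mm) with htdef
    have hmpm : 0 < mp - mm := by linarith
    have ht0 : 0 < t := div_pos (by linarith) hmpm
    have ht1 : t < 1 := by rw [div_lt_one hmpm]; linarith
    set ρstar := (ENNReal.ofReal t) • ρminus + (ENNReal.ofReal (1-t)) • ρplus with hρstardef
    have habsum : ENNReal.ofReal t + ENNReal.ofReal (1-t) = 1 := by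
      rw [← ENNReal.ofReal_add (by linarith) (by linarith)]
      norm_num
    have hρstar_univ : ρstar univ = 1 := by
      rw [hρstardef, Measure.add_apply, Measure.smul_apply, Measure.smul_apply,
        smul_eq_mul, smul_eq_mul,
        show ρminus univ = ENNReal.ofReal mm from (ENNReal.ofReal_toReal (measure_ne_top _ _)).symm,
        show ρplus univ = ENNReal.ofReal mp from (ENNReal.ofReal_toReal (measure_ne_top _ _)).symm,
        ← ENNReal.ofReal_mul ht0.le, ← ENNReal.ofReal_mul (by linarith : (0:ℝ) ≤ 1 - t),
        ← ENNReal.ofReal_add (mul_nonneg ht0.le hmm0) (mul_nonneg (by linarith) (by linarith))]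
      rw [show t * mm + (1-t)*mp = 1 by rw [htdef]; field_simp; ring]
      exact ENNReal.ofReal_one
    haveI hρstarProb : IsProbabilityMeasure ρstar := ⟨hρstar_univ⟩
    have hρstar_supp : ρstar Ωᶜ = 0 := by
      rw [hρstardef, Measure.add_apply, Measure.smul_apply, Measure.smul_apply, hmsupp, hpsupp]
      simp
    have hFstar : F ρstar ≠ ⊤ := by
      intro h
      have hle : F ρstar ≤ ENNReal.ofReal t * F ρminus + ENNReal.ofReal (1-t) * F ρplus :=
        hFconv ρminus ρplus _ _ habsum
      rw [h] at hle
      have hne : ENNReal.ofReal t * F ρminus + ENNReal.ofReal (1-t) * F ρplus ≠ ⊤ :=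
        ENNReal.add_ne_top.2 ⟨ENNReal.mul_ne_top ENNReal.ofReal_ne_top hFm,
          ENNReal.mul_ne_top ENNReal.ofReal_ne_top hFp⟩
      exact hne (top_le_iff.1 hle)
    have hfmdef : ((F ρminus : ℝ≥0∞) : EReal) = (((F ρminus).toReal : ℝ) : EReal) :=
      ennreal_coe_ereal_eq hFm
    have hfpdef : ((F ρplus : ℝ≥0∞) : EReal) = (((F ρplus).toReal : ℝ) : EReal) :=
      ennreal_coe_ereal_eq hFp
    have hfsdef : ((F ρstar : ℝ≥0∞) : EReal) = (((F ρstar).toReal : ℝ) : EReal) :=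
      ennreal_coe_ereal_eq hFstar
    set fm := (F ρminus).toReal with hfm
    set fp := (F ρplus).toReal with hfp
    set fs := (F ρstar).toReal with hfs
    -- uniform upper bound for dualVal
    have hub : ∀ φ : Euc d → ℝ, CConcave (cost ε) φ →
        dualVal Ω F (cost ε) μ φ ≤ ((C0 + fs : ℝ) : EReal) := by
      intro φ hφ
      obtain ⟨ψ0, hψ0c, ⟨M0, hM0⟩, hφeq⟩ := hφ
      have hφabs : ∀ y, |φ y| ≤ M0 := fun y => by rw [hφeq]; exact ctrans_abs_le hε hM0 y
      have hφcont : Continuous φ := by rw [hφeq]; exact ctrans_cont hε hM0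
      set v := ctrans (cost ε) φ with hv
      have hvabs : ∀ x, |v x| ≤ M0 := ctrans_abs_le hε hφabs
      have hvcont : Continuous v := ctrans_cont hε hφabs
      obtain ⟨zs, hzs, hmax⟩ := hΩc.exists_isMaxOn hΩne hvcont.continuousOn
      set b := v zs with hbdef
      have hkey : ∀ z ∈ Ω, ∀ y : Euc d, φ y ≤ cost ε z y - v z := by
        intro z hz y
        have h := ctrans_le hε (ψ := φ) (M := M0) (fun x => (abs_le.1 (hφabs x)).2) y z
        have hsymm : cost ε y z = cost ε z y := cost_symm _ _
        rw [hsymm] at h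
        rw [hv]
        linarith
      have hIμ : ∫ y, φ y ∂μ ≤ C0 - b := by
        have hpt : ∀ y ∈ K, φ y ≤ C0 - b := by
          intro y hy
          have h1 := hkey zs hzs y
          have h2 := hC0 zs hzs y hy
          linarith
        have hint : Integrable φ μ := integrable_of_bound μ φ hφcont M0 hφabs
        calc ∫ y, φ y ∂μ ≤ ∫ _, (C0 - b) ∂μ :=
              integral_mono_on_supp (Ω := K) μ hμK hint (integrable_const _) hpt
          _ = C0 - b := by simp
      have hIv : -b ≤ ∫ x, (-v x) ∂ρstar := by
        have hpt : ∀ x ∈ Ω, (fun _ : Euc d => -b) x ≤ -v x := by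
          intro x hx
          have := hmax hx
          simp only [neg_le_neg_iff]
          exact this
        calc -b = ∫ _, (-b : ℝ) ∂ρstar := by simp
          _ ≤ ∫ x, (-v x) ∂ρstar :=
              integral_mono_on_supp ρstar hρstar_supp (integrable_const _)
                ((integrable_of_bound ρstar v hvcont M0 hvabs).neg) hpt
      have hleg_lb : ((-b - fs : ℝ) : EReal) ≤ legendre Ω F (fun y => -v y) := by
        refine le_trans ?_ (legendre_ge ρstar inferInstance hρstar_supp _)
        rw [hfsdef, ← EReal.coe_sub, EReal.coe_le_coe_iff]
        linarith
      have hform : dualVal Ω F (cost ε) μ φ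
          = ((∫ x, φ x ∂μ : ℝ) : EReal) - legendre Ω F (fun y => -v y) := by
        rw [dualVal, hv]
      rw [hform]
      calc ((∫ x, φ x ∂μ : ℝ):EReal) - legendre Ω F (fun y => -v y)
          ≤ ((C0 - b : ℝ):EReal) - ((-b - fs : ℝ):EReal) :=
            EReal.sub_le_sub (EReal.coe_le_coe_iff.2 hIμ) hleg_lb
        _ = ((C0 + fs : ℝ):EReal) := by rw [← EReal.coe_sub]; congr 1; ring
    -- lower bound for the supremum
    have hdv0 : (0:EReal) ≤ dualVal Ω F (cost ε) μ (fun _ => (0:ℝ)) := by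
      rw [dualVal]
      have h0 : (fun y : Euc d => -ctrans (cost ε) (fun _ => (0:ℝ)) y) = fun _ : Euc d => (0:ℝ) := by
        rw [hzero]; funext y; simp
      rw [h0]
      have hL : legendre Ω F (fun _ : Euc d => (0:ℝ)) ≤ 0 := by
        refine legendre_le fun σ h1 h2 => ?_
        rw [integral_zero]
        calc ((0:ℝ):EReal) - ((F σ : ℝ≥0∞):EReal) ≤ ((0:ℝ):EReal) - 0 :=
              EReal.sub_le_sub le_rfl (EReal.coe_ennreal_nonneg _)
          _ ≤ 0 := by norm_num
      rw [integral_zero]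
      calc (0:EReal) = ((0:ℝ):EReal) - 0 := by norm_num
        _ ≤ ((0:ℝ):EReal) - legendre Ω F (fun _ : Euc d => (0:ℝ)) := EReal.sub_le_sub le_rfl hL
    set s : EReal := ⨆ (ψ : Euc d → ℝ) (_ : CConcave (cost ε) ψ), dualVal Ω F (cost ε) μ ψ
      with hsdef
    have hs_le : s ≤ ((C0 + fs : ℝ) : EReal) := iSup₂_le hub
    have hs0 : (0:EReal) ≤ s := le_trans hdv0 (le_iSup₂_of_le _ hCC0 le_rfl)
    have hstop : s ≠ ⊤ := fun h => by rw [h, top_le_iff] at hs_le; exact EReal.coe_ne_top _ hs_le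
    have hsbot : s ≠ ⊥ := fun h => by rw [h, le_bot_iff] at hs0; simp at hs0
    set sr := s.toReal with hsrdef
    have hsr : ((sr:ℝ):EReal) = s := EReal.coe_toReal hstop hsbot
    -- maximizing sequence
    have hseq : ∀ n : ℕ, ∃ φ, CConcave (cost ε) φ ∧
        ((sr - 1/(n+1) : ℝ) : EReal) < dualVal Ω F (cost ε) μ φ := by
      intro n
      by_contra hcon
      push_neg at hcon
      have hle : s ≤ ((sr - 1/(n+1) : ℝ) : EReal) := iSup₂_le fun φ hφ => hcon φ hφ
      rw [← hsr, EReal.coe_le_coe_iff] at hle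
      have hpos : (0:ℝ) < 1/(n+1) := by positivity
      linarith
    -- uniform constants
    set Bp := (C0 + fm + 1 - sr)/(1 - mm) with hBpdef
    set Bm := (sr - 1 - C0 - fp)/(mp - 1) with hBmdef
    set R' := |C0| + |Bm| + 1 with hR'def
    have hR'0 : 0 < R' := by positivity
    set B3 := max Bp R' with hB3def
    have hR'B3 : R' ≤ B3 := le_max_right _ _
    have hmaxB3 : max B3 |R'| = B3 := by
      rw [abs_of_pos hR'0]
      exact max_eq_left hR'B3
    -- one improvement step: from any near-maximizer we construct a canonical one
    have improve : ∀ n : ℕ, ∃ vfun : Euc d → ℝ,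
        Continuous vfun ∧ (∀ x, |vfun x| ≤ B3) ∧
        vfun = ctrans (cost ε) (PW ε R' Ω vfun) ∧
        ((sr - 1/(n+1) : ℝ) : EReal) < dualVal Ω F (cost ε) μ (PW ε R' Ω vfun) := by
      intro n
      obtain ⟨φ, hφCC, hφlt⟩ := hseq n
      obtain ⟨ψ0, hψ0c, ⟨M0, hM0⟩, hφeq⟩ := hφCC
      have hφabs : ∀ y, |φ y| ≤ M0 := fun y => by rw [hφeq]; exact ctrans_abs_le hε hM0 y
      have hφcont : Continuous φ := by rw [hφeq]; exact ctrans_cont hε hM0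
      set v := ctrans (cost ε) φ with hv
      have hvabs : ∀ x, |v x| ≤ M0 := ctrans_abs_le hε hφabs
      have hvcont : Continuous v := ctrans_cont hε hφabs
      obtain ⟨zs, hzs, hmax⟩ := hΩc.exists_isMaxOn hΩne hvcont.continuousOn
      set b := v zs with hbdef
      have hkey : ∀ z ∈ Ω, ∀ y : Euc d, φ y ≤ cost ε z y - v z := by
        intro z hz y
        have h := ctrans_le hε (ψ := φ) (M := M0) (fun x => (abs_le.1 (hφabs x)).2) y z
        have hsymm : cost ε y z = cost ε z y := cost_symm _ _
        rw [hsymm] at h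
        rw [hv]
        linarith
      -- the legendre term is finite
      set Lv := legendre Ω F (fun y => -v y) with hLvdef
      have hdv_eq : dualVal Ω F (cost ε) μ φ = ((∫ x, φ x ∂μ : ℝ):EReal) - Lv := by
        rw [dualVal, hLvdef, hv]
      have hLv_lb : ((-(∫ x, v x ∂ρminus) - fm : ℝ) : EReal) ≤ Lv := by
        rw [hLvdef]
        refine le_trans ?_ (legendre_ge ρminus hmfin hmsupp _)
        rw [hfmdef, integral_neg, ← EReal.coe_sub]
      have hLv_ne_top : Lv ≠ ⊤ := by
        intro h
        rw [hdv_eq, h, EReal.sub_top] at hφlt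
        exact not_lt_bot hφlt
      have hLv_ne_bot : Lv ≠ ⊥ := by
        intro h
        rw [h, le_bot_iff] at hLv_lb
        exact EReal.coe_ne_bot _ hLv_lb
      set ℓ := Lv.toReal with hℓdef
      have hLv_eq : Lv = ((ℓ:ℝ):EReal) := (EReal.coe_toReal hLv_ne_top hLv_ne_bot).symm
      set Iμ := ∫ x, φ x ∂μ with hIμdef
      have hreal : sr - 1/(n+1) < Iμ - ℓ := by
        rw [hdv_eq, hLv_eq, ← EReal.coe_sub, EReal.coe_lt_coe_iff] at hφlt
        exact hφlt
      have hn1 : (0:ℝ) < 1/(n+1) := by positivity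
      have hn1' : (1:ℝ)/(n+1) ≤ 1 := by
        rw [div_le_one (by positivity)]
        have : (0:ℝ) ≤ (n:ℝ) := Nat.cast_nonneg n
        linarith
      -- lower bounds on ℓ from test measures
      have hℓm : -(∫ x, v x ∂ρminus) - fm ≤ ℓ := by
        rw [hLv_eq, EReal.coe_le_coe_iff] at hLv_lb
        exact hLv_lb
      have hℓp : -(∫ x, v x ∂ρplus) - fp ≤ ℓ := by
        have h : ((-(∫ x, v x ∂ρplus) - fp : ℝ) : EReal) ≤ Lv := by
          rw [hLvdef]
          refine le_trans ?_ (legendre_ge ρplus hpfin hpsupp _)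
          rw [hfpdef, integral_neg, ← EReal.coe_sub]
        rw [hLv_eq, EReal.coe_le_coe_iff] at h
        exact h
      -- bounds on b
      have hIμb : Iμ ≤ C0 - b := by
        have hpt : ∀ y ∈ K, φ y ≤ C0 - b := by
          intro y hy
          have h1 := hkey zs hzs y
          have h2 := hC0 zs hzs y hy
          linarith
        have hint : Integrable φ μ := integrable_of_bound μ φ hφcont M0 hφabs
        calc Iμ ≤ ∫ _, (C0 - b) ∂μ :=
              integral_mono_on_supp (Ω := K) μ hμK hint (integrable_const _) hpt
          _ = C0 - b := by simp
      have hIvm : ∫ x, v x ∂ρminus ≤ b * mm := by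
        have hpt : ∀ x ∈ Ω, v x ≤ (fun _ : Euc d => b) x := fun x hx => hmax hx
        calc ∫ x, v x ∂ρminus ≤ ∫ _, b ∂ρminus :=
              integral_mono_on_supp ρminus hmsupp
                (integrable_of_bound ρminus v hvcont M0 hvabs) (integrable_const _) hpt
          _ = b * mm := by rw [integral_const, smul_eq_mul, hmmdef]; simp only [Measure.real]; ring
      have hIvp : ∫ x, v x ∂ρplus ≤ b * mp := by
        have hpt : ∀ x ∈ Ω, v x ≤ (fun _ : Euc d => b) x := fun x hx => hmax hx
        calc ∫ x, v x ∂ρplus ≤ ∫ _, b ∂ρplus :=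
              integral_mono_on_supp ρplus hpsupp
                (integrable_of_bound ρplus v hvcont M0 hvabs) (integrable_const _) hpt
          _ = b * mp := by rw [integral_const, smul_eq_mul, hmpdef]; simp only [Measure.real]; ring
      have hbub : b ≤ Bp := by
        rw [hBpdef, le_div_iff₀ (by linarith : (0:ℝ) < 1 - mm)]
        have hexp : b * (1 - mm) = b - b * mm := by ring
        rw [hexp]
        linarith
      have hblb : Bm ≤ b := by
        rw [hBmdef, div_le_iff₀ (by linarith : (0:ℝ) < mp - 1)]
        have hexp : b * (mp - 1) = b * mp - b := by ring
        rw [hexp]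
        linarith
      -- truncation from below
      set vh := fun x => max (v x) (-R') with hvhdef
      have hvh_ub : ∀ z ∈ Ω, vh z ≤ B3 := by
        intro z hz
        have h1 : v z ≤ b := hmax hz
        have h2 : Bp ≤ B3 := le_max_left _ _
        have h3 : -R' ≤ B3 := by linarith
        rw [hvhdef]
        simp only [max_le_iff]
        constructor <;> linarith
      have hvh_abs : ∀ z ∈ Ω, |vh z| ≤ B3 := by
        intro z hz
        rw [abs_le]
        refine ⟨?_, hvh_ub z hz⟩
        have h1 : -R' ≤ vh z := le_max_right _ _
        linarith
      set φ' := PW ε R' Ω vh with hφ'def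
      have hφ'abs : ∀ y, |φ' y| ≤ B3 := by
        intro y
        have h := PW_abs_le (R' := R') hε hΩne hvh_abs y
        rw [hmaxB3] at h
        exact h
      have hφ'cont : Continuous φ' := PW_cont hε hΩne hRΩ hvh_ub
      -- φ ≤ φ' on K
      have hφK : ∀ y ∈ K, φ y ≤ φ' y := by
        intro y hy
        have hyb : φ y ≤ C0 - b := by
          have h1 := hkey zs hzs y
          have h2 := hC0 zs hzs y hy
          linarith
        have hyR : φ y ≤ R' - 1 := by
          have h2 : C0 - Bm ≤ |C0| + |Bm| := by
            have := le_abs_self C0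
            have := neg_abs_le Bm
            linarith
          rw [hR'def]
          linarith
        rw [hφ'def, PW]
        refine le_min ?_ (by linarith)
        haveI : Nonempty Ω := hΩne.to_subtype
        refine le_ciInf fun z => ?_
        rcases le_total (-R') (v z) with h | h
        · rw [hvhdef]
          simp only
          rw [max_eq_left h]
          exact hkey z z.2 y
        · rw [hvhdef]
          simp only
          rw [max_eq_right h]
          have := cost_nonneg hε (z:Euc d) y
          linarith
      have hIμ' : Iμ ≤ ∫ y, φ' y ∂μ :=
        integral_mono_on_supp (Ω := K) μ hμK (integrable_of_bound μ φ hφcont M0 hφabs)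
          (integrable_of_bound μ φ' hφ'cont B3 hφ'abs) hφK
      -- transform of φ'
      set w' := ctrans (cost ε) φ' with hw'def
      have hw'cont : Continuous w' := ctrans_cont hε hφ'abs
      have hw'abs : ∀ x, |w' x| ≤ B3 := ctrans_abs_le hε hφ'abs
      have hw'ge : ∀ z ∈ Ω, v z ≤ w' z := by
        intro z hz
        have h1 : vh z ≤ w' z := by
          rw [hw'def, hφ'def]
          exact PW_ctrans_ge hε hΩne hvh_ub hz
        have h2 : v z ≤ vh z := le_max_left _ _
        linarith
      have hLmono : legendre Ω F (fun y => -w' y) ≤ Lv := by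
        rw [hLvdef]
        refine legendre_mono hw'cont.neg hvcont.neg (M1 := B3) (M2 := M0)
          (fun x => by rw [abs_neg]; exact hw'abs x) (fun x => by rw [abs_neg]; exact hvabs x) ?_
        intro x hx
        have := hw'ge x hx
        linarith
      have hdv' : ((sr - 1/(n+1) : ℝ):EReal) < dualVal Ω F (cost ε) μ φ' := by
        have hform : dualVal Ω F (cost ε) μ φ'
            = ((∫ y, φ' y ∂μ : ℝ):EReal) - legendre Ω F (fun y => -w' y) := by
          rw [dualVal, hw'def]
        rw [hform]
        refine lt_of_lt_of_le hφlt ?_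
        rw [hdv_eq]
        exact EReal.sub_le_sub (EReal.coe_le_coe_iff.2 hIμ') hLmono
      -- the pair (φ', w') is closed : PW of w' gives back φ'
      have hPWeq : PW ε R' Ω w' = φ' := by
        funext y
        apply le_antisymm
        · refine PW_anti hε hΩne (fun z hz => (abs_le.1 (hw'abs z)).2) ?_ y
          intro z hz
          have h1 : v z ≤ w' z := hw'ge z hz
          have h2 : -R' ≤ w' z := by
            rw [hw'def, hφ'def]
            exact PW_ctrans_ge' hε z
          rw [hvhdef]
          simp only [max_le_iff]
          exact ⟨h1, h2⟩
        · rw [PW]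
          refine le_min ?_ (PW_le' y)
          haveI : Nonempty Ω := hΩne.to_subtype
          refine le_ciInf fun z => ?_
          have h := ctrans_le hε (ψ := φ') (M := B3)
            (fun x => (abs_le.1 (hφ'abs x)).2) y (z : Euc d)
          rw [← hw'def] at h
          have hsymm : cost ε y (z:Euc d) = cost ε (z:Euc d) y := cost_symm _ _
          rw [hsymm] at h
          linarith
      refine ⟨w', hw'cont, hw'abs, ?_, ?_⟩
      · rw [hPWeq, hw'def]
      · rw [hPWeq]
        exact hdv'
    choose vseq hvcont' hvabs' hvpair hvlt using improve
    -- Arzelà–Ascoli on the closed ball E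
    set Λ3 := (4*RΩ + 2*Real.sqrt (2*ε*(2*B3+1)))/(2*ε) with hΛ3def
    have hPWabs : ∀ n y, |PW ε R' Ω (vseq n) y| ≤ B3 := by
      intro n y
      have h := PW_abs_le (R' := R') hε hΩne (fun z _ => hvabs' n z) y
      rwa [hmaxB3] at h
    have hlipseq : ∀ n, ∀ x y : Euc d, ‖x‖ ≤ RΩ → ‖y‖ ≤ RΩ →
        |vseq n x - vseq n y| ≤ Λ3 * ‖x - y‖ := by
      intro n x y hx hy
      have h1 : vseq n x - vseq n y ≤ Λ3 * ‖x - y‖ := by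
        conv_lhs => rw [hvpair n]
        exact ctrans_lip hε (hPWabs n) hy hx
      have h2 : vseq n y - vseq n x ≤ Λ3 * ‖y - x‖ := by
        conv_lhs => rw [hvpair n]
        exact ctrans_lip hε (hPWabs n) hx hy
      rw [norm_sub_rev] at h2
      rw [abs_le]
      constructor <;> linarith
    set E := Metric.closedBall (0:Euc d) RΩ with hEdef
    have hEc : IsCompact E := isCompact_closedBall _ _
    haveI hEcs : CompactSpace E := isCompact_iff_compactSpace.1 hEc
    have hΩE : Ω ⊆ E := by
      intro z hz
      rw [hEdef, Metric.mem_closedBall, dist_zero_right]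
      exact hRΩ z hz
    have hmemE : ∀ x : E, ‖(x:Euc d)‖ ≤ RΩ := by
      intro x
      have hx : (x : Euc d) ∈ Metric.closedBall (0:Euc d) RΩ := x.2
      rwa [Metric.mem_closedBall, dist_zero_right] at hx
    obtain ⟨fseq, hfseq⟩ : ∃ f : ℕ → BoundedContinuousFunction ↥E ℝ,
        ∀ n (z : ↥E), f n z = vseq n z :=
      ⟨fun n => BoundedContinuousFunction.mkOfCompact
        ⟨fun z : ↥E => vseq n (z : Euc d), (hvcont' n).comp continuous_subtype_val⟩,
        fun n z => rfl⟩
    set A : Set (BoundedContinuousFunction ↥E ℝ) := range fseq with hAdef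
    have hin_s : ∀ (f : BoundedContinuousFunction ↥E ℝ) (x : ↥E), f ∈ A → f x ∈ Icc (-B3) B3 := by
      rintro f x ⟨n, rfl⟩
      rw [mem_Icc, hfseq n x]
      exact abs_le.1 (hvabs' n x)
    have hequi : Equicontinuous ((↑) : A → E → ℝ) := by
      apply Metric.equicontinuous_of_continuity_modulus (fun t => Λ3 * t)
      · have h : Tendsto (fun t : ℝ => Λ3 * t) (𝓝 0) (𝓝 (Λ3 * 0)) :=
          (continuous_const.mul continuous_id).tendsto 0
        simpa using h
      · rintro x y ⟨f, n, rfl⟩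
        simp only [hfseq n]
        rw [Real.dist_eq, Subtype.dist_eq, dist_eq_norm]
        exact hlipseq n x y (hmemE x) (hmemE y)
    have hAA : IsCompact (closure A) :=
      BoundedContinuousFunction.arzela_ascoli (Icc (-B3) B3) isCompact_Icc A hin_s hequi
    have hmem : ∀ n, fseq n ∈ closure A := fun n => subset_closure ⟨n, rfl⟩
    obtain ⟨flim, hflimmem, κ, hκmono, hκtend⟩ := hAA.isSeqCompact hmem
    set dels : ℕ → ℝ := fun k => dist (fseq (κ k)) flim with hδdef
    have hdel0 : Tendsto dels atTop (𝓝 0) := by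
      rw [tendsto_iff_dist_tendsto_zero] at hκtend
      exact hκtend
    set vlim : Euc d → ℝ := fun x => if hx : x ∈ E then flim ⟨x, hx⟩ else 0 with hvlimdef
    have hvlimΩ : ∀ z ∈ Ω, ∀ k, |vseq (κ k) z - vlim z| ≤ dels k := by
      intro z hz k
      have hzE : z ∈ E := hΩE hz
      have hval : vlim z = flim ⟨z, hzE⟩ := dif_pos hzE
      rw [hval]
      have h := BoundedContinuousFunction.dist_coe_le_dist (f := fseq (κ k)) (g := flim) ⟨z, hzE⟩
      rw [Real.dist_eq, hfseq (κ k) ⟨z, hzE⟩] at h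
      exact h
    have hvlimB : ∀ z ∈ Ω, |vlim z| ≤ B3 := by
      intro z hz
      have hlim : Tendsto (fun k => vseq (κ k) z) atTop (𝓝 (vlim z)) := by
        rw [tendsto_iff_dist_tendsto_zero]
        refine squeeze_zero (fun k => dist_nonneg) (fun k => ?_) hdel0
        rw [Real.dist_eq]
        exact hvlimΩ z hz k
      have habs : Tendsto (fun k => |vseq (κ k) z|) atTop (𝓝 |vlim z|) := hlim.abs
      exact le_of_tendsto habs (Eventually.of_forall fun k => hvabs' (κ k) z)
    have hvlimub : ∀ z ∈ Ω, vlim z ≤ B3 := fun z hz => (abs_le.1 (hvlimB z hz)).2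
    -- limit potential
    set philim := PW ε R' Ω vlim with hphilimdef
    have hphilimabs : ∀ y, |philim y| ≤ B3 := by
      intro y
      have h := PW_abs_le (R' := R') hε hΩne hvlimB y
      rwa [hmaxB3] at h
    have hphilimcont : Continuous philim := PW_cont hε hΩne hRΩ hvlimub
    set wlim := ctrans (cost ε) philim with hwlimdef
    have hwlimcont : Continuous wlim := ctrans_cont hε hphilimabs
    have hwlimabs : ∀ x, |wlim x| ≤ B3 := ctrans_abs_le hε hphilimabs
    have hCClim : CConcave (cost ε) philim := by
      refine ⟨wlim, hwlimcont, ⟨B3, hwlimabs⟩, ?_⟩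
      rw [hwlimdef, hphilimdef]
      exact (PW_ctrans_ctrans hε hΩne hvlimB).symm
    -- uniform comparisons along the subsequence
    have hφdiff : ∀ k y, |PW ε R' Ω (vseq (κ k)) y - philim y| ≤ dels k := by
      intro k y
      rw [hphilimdef]
      exact PW_nonexp hε hΩne (fun z _ => (abs_le.1 (hvabs' (κ k) z)).2) hvlimub
        (fun z hz => hvlimΩ z hz k) y
    have hvdiff : ∀ k x, |vseq (κ k) x - wlim x| ≤ dels k := by
      intro k x
      conv_lhs => rw [hvpair (κ k)]
      rw [hwlimdef]
      exact ctrans_nonexp hε (fun y => (abs_le.1 (hPWabs (κ k) y)).2)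
        (fun y => (abs_le.1 (hphilimabs y)).2) (hφdiff k) x
    set Imu := ∫ y, philim y ∂μ with hImudef
    have hintlim : Integrable philim μ := integrable_of_bound μ philim hphilimcont B3 hphilimabs
    -- the key limit inequality
    have hclaim : legendre Ω F (fun y => -wlim y) ≤ ((Imu - sr : ℝ):EReal) := by
      refine legendre_le fun σ hσf hσs => ?_
      by_cases hFσ : F σ = ⊤
      · rw [hFσ, EReal.coe_ennreal_top, EReal.sub_top]
        exact bot_le
      haveI := hσf
      rw [ennreal_coe_ereal_eq hFσ, integral_neg, ← EReal.coe_sub, EReal.coe_le_coe_iff]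
      set fσ := (F σ).toReal with hfσdef
      set mσ := (σ univ).toReal with hmσdef
      have hmσ0 : 0 ≤ mσ := ENNReal.toReal_nonneg
      have hintw : Integrable wlim σ := integrable_of_bound σ wlim hwlimcont B3 hwlimabs
      have hk : ∀ k : ℕ, sr ≤ Imu + ∫ x, wlim x ∂σ + fσ + (dels k * (1 + mσ) + 1/(κ k + 1)) := by
        intro k
        set vk := vseq (κ k) with hvkdef
        set φk := PW ε R' Ω vk with hφkdef
        have hφkabs : ∀ y, |φk y| ≤ B3 := hPWabs (κ k)
        have hφkcont : Continuous φk :=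
          PW_cont hε hΩne hRΩ (fun z _ => (abs_le.1 (hvabs' (κ k) z)).2)
        have hdvk := hvlt (κ k)
        rw [← hφkdef] at hdvk
        have hδk0 : 0 ≤ dels k := dist_nonneg
        have hdveq : dualVal Ω F (cost ε) μ φk
            = ((∫ y, φk y ∂μ : ℝ):EReal) - legendre Ω F (fun y => -vk y) := by
          rw [dualVal]
          congr 2
          funext y
          rw [hφkdef]
          rw [← hvpair (κ k)]
        set Lk := legendre Ω F (fun y => -vk y) with hLkdef
        have hLk_ne_top : Lk ≠ ⊤ := by
          intro h
          rw [hdveq, h, EReal.sub_top] at hdvk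
          exact not_lt_bot hdvk
        have hLk_lb : ((-(∫ x, vk x ∂σ) - fσ : ℝ):EReal) ≤ Lk := by
          rw [hLkdef]
          refine le_trans ?_ (legendre_ge σ hσf hσs _)
          rw [ennreal_coe_ereal_eq hFσ, integral_neg, ← EReal.coe_sub]
        have hLk_ne_bot : Lk ≠ ⊥ := by
          intro h
          rw [h, le_bot_iff] at hLk_lb
          exact EReal.coe_ne_bot _ hLk_lb
        set ℓk := Lk.toReal with hℓkdef
        have hLk_eq : Lk = ((ℓk:ℝ):EReal) := (EReal.coe_toReal hLk_ne_top hLk_ne_bot).symm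
        have hℓk_lb : -(∫ x, vk x ∂σ) - fσ ≤ ℓk := by
          rw [hLk_eq, EReal.coe_le_coe_iff] at hLk_lb
          exact hLk_lb
        have hrealk : sr - 1/(κ k + 1) < ∫ y, φk y ∂μ - ℓk := by
          rw [hdveq, hLk_eq, ← EReal.coe_sub, EReal.coe_lt_coe_iff] at hdvk
          exact hdvk
        have hIφk : ∫ y, φk y ∂μ ≤ Imu + dels k := by
          have hpt : ∀ y : Euc d, φk y ≤ philim y + dels k := by
            intro y
            have := (abs_le.1 (hφdiff k y)).2
            rw [← hφkdef] at this
            linarith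
          calc ∫ y, φk y ∂μ ≤ ∫ y, (philim y + dels k) ∂μ :=
                integral_mono (integrable_of_bound μ φk hφkcont B3 hφkabs)
                  (hintlim.add (integrable_const _)) hpt
            _ = Imu + dels k := by
                rw [integral_add hintlim (integrable_const _), integral_const]
                simp [hImudef]
        have hIvk : ∫ x, vk x ∂σ ≤ ∫ x, wlim x ∂σ + dels k * mσ := by
          have hpt : ∀ x : Euc d, vk x ≤ wlim x + dels k := by
            intro x
            have := (abs_le.1 (hvdiff k x)).2
            rw [← hvkdef] at this
            linarith
          have hintvk : Integrable vk σ :=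
            integrable_of_bound σ vk (hvcont' (κ k)) B3 (hvabs' (κ k))
          calc ∫ x, vk x ∂σ ≤ ∫ x, (wlim x + dels k) ∂σ :=
                integral_mono hintvk (hintw.add (integrable_const _)) hpt
            _ = ∫ x, wlim x ∂σ + dels k * mσ := by
                rw [integral_add hintw (integrable_const _), integral_const, smul_eq_mul,
                  hmσdef]
                simp only [Measure.real]
                ring
        linarith
      have hκk : ∀ k : ℕ, (0:ℝ) < (κ k : ℝ) + 1 := by
        intro k
        positivity
      have htends : Tendsto (fun k => dels k * (1 + mσ) + 1/((κ k : ℝ) + 1)) atTop (𝓝 0) := by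
        have h1 : Tendsto (fun k => dels k * (1 + mσ)) atTop (𝓝 (0 * (1+mσ))) :=
          hdel0.mul_const _
        have h2 : Tendsto (fun k : ℕ => 1/((κ k : ℝ) + 1)) atTop (𝓝 0) := by
          refine squeeze_zero (fun k => by positivity) (fun k => ?_)
            tendsto_one_div_add_atTop_nhds_zero_nat
          have hκ : (k:ℝ) ≤ (κ k : ℝ) := Nat.cast_le.2 (hκmono.le_apply)
          have h3 : (0:ℝ) < (k:ℝ) + 1 := by positivity
          exact one_div_le_one_div_of_le h3 (by linarith)
        have := h1.add h2
        simpa using this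
      have hlim : sr ≤ Imu + ∫ x, wlim x ∂σ + fσ := by
        have hconst : Tendsto (fun k => Imu + ∫ x, wlim x ∂σ + fσ
            + (dels k * (1 + mσ) + 1/((κ k : ℝ) + 1))) atTop (𝓝 (Imu + ∫ x, wlim x ∂σ + fσ)) := by
          have := htends.const_add (Imu + ∫ x, wlim x ∂σ + fσ)
          simpa using this
        exact ge_of_tendsto hconst (Eventually.of_forall fun k => hk k)
      linarith
    -- conclusion
    have hfinal_ge : s ≤ dualVal Ω F (cost ε) μ philim := by
      have hform : dualVal Ω F (cost ε) μ philim
          = ((Imu : ℝ):EReal) - legendre Ω F (fun y => -wlim y) := by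
        rw [dualVal, hwlimdef, hImudef]
      rw [hform, ← hsr]
      calc ((sr:ℝ):EReal) = ((Imu:ℝ):EReal) - ((Imu - sr : ℝ):EReal) := by
            rw [← EReal.coe_sub]
            congr 1
            ring
        _ ≤ _ := EReal.sub_le_sub le_rfl hclaim
    exact ⟨philim, hCClim, le_antisymm (le_iSup₂_of_le philim hCClim le_rfl) hfinal_ge⟩




end
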